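/- Let n ≥ 1, let f ∈ Q₀ⁿ, and suppose there exists a ∈ [e^{−n}, 1] such that a·‖f‖_∞·1_{B₂ⁿ}(x) ≤ f(x) for all x ∈ ℝⁿ, where B₂ⁿ is the closed Euclidean unit ball centered at the origin (this holds in particular when f is in John's position). Then for every t > 0 and every x ∈ ℝⁿ, sup_{y : |y−x| ≤ t} f(y) ≤ e^{n·t} · f(x/(1+t)). -/

import Mathlib

open MeasureTheory

noncomputable section

/-- `ℝⁿ` with its Euclidean structure. -/
abbrev Eucl (n : ℕ) := EuclideanSpace ℝ (Fin n)

/-- `f : ℝⁿ → [0,∞)` is log-concave: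
`f(tx+(1−t)y) ≥ f(x)^t · f(y)^(1−t)` for all `x, y` and `t ∈ (0,1)`. -/
def IsLogConcave {n : ℕ} (f : Eucl n → ℝ) : Prop :=
  ∀ x y : Eucl n, ∀ t : ℝ, 0 < t → t < 1 →
    f x ^ t * f y ^ (1 - t) ≤ f (t • x + (1 - t) • y)

/-- The class `Q₀ⁿ`: nonnegative, log-concave, upper semicontinuous, integrable
functions with positive integral. -/
def MemQ0 {n : ℕ} (f : Eucl n → ℝ) : Prop :=
  (∀ x, 0 ≤ f x) ∧ IsLogConcave f ∧ UpperSemicontinuous f ∧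
    Integrable f ∧ 0 < ∫ x, f x

/-- `‖f‖_∞ = sup f`. -/
def supNorm {n : ℕ} (f : Eucl n → ℝ) : ℝ := ⨆ x, f x

/-- `‖f‖_p = (∫ f^p)^(1/p)`. -/
def lpNorm {n : ℕ} (p : ℝ) (f : Eucl n → ℝ) : ℝ := (∫ x, f x ^ p) ^ (1 / p)

/-- `‖P_H f‖_{L¹(H)} = ∫_H sup_{z ∈ H⊥} f(y+z) dλ_H(y)`, the `L¹(H)`-norm of the
projection of `f` onto the subspace `H` (with the Lebesgue measure on `H` induced
by the Euclidean structure). -/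
def projL1 {n : ℕ} (f : Eucl n → ℝ) (H : Submodule ℝ (Eucl n)) : ℝ :=
  ∫ y : H, ⨆ z : Hᗮ, f ((y : Eucl n) + (z : Eucl n))

/-- `‖S_H f‖_{L¹(H)} = ∫_H f dλ_H`, the integral of the section `f|_H`. -/
def sectL1 {n : ℕ} (f : Eucl n → ℝ) (H : Submodule ℝ (Eucl n)) : ℝ :=
  ∫ y : H, f (y : Eucl n)

lemma bdd_aux {n : ℕ} (f : Eucl n → ℝ) (h0 : ∀ x, 0 ≤ f x) (hlc : IsLogConcave f)
    (husc : UpperSemicontinuous f) (hint : Integrable f) (hpos : 0 < ∫ x, f x) :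
    BddAbove (Set.range f) := by
  have hmeas : Measurable f := husc.measurable
  -- find c > 0 with positive-measure superlevel set
  have hne : volume {x | f x ≠ 0} ≠ 0 := by
    intro h
    have hae : f =ᵐ[volume] 0 := by
      rwa [Filter.EventuallyEq, ae_iff]
    rw [integral_congr_ae hae] at hpos
    simp at hpos
  obtain ⟨k, hk⟩ : ∃ k : ℕ, volume {x | 1/(k+1 : ℝ) < f x} ≠ 0 := by
    by_contra h
    push_neg at h
    apply hne
    refine measure_mono_null ?_ (measure_iUnion_null h)
    intro x hx
    have hx0 : 0 < f x := lt_of_le_of_ne (h0 x) (Ne.symm hx)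
    obtain ⟨m, hm⟩ := exists_nat_one_div_lt hx0
    exact Set.mem_iUnion.2 ⟨m, hm⟩
  set c : ℝ := 1/(k+1 : ℝ) with hc
  have hc0 : 0 < c := by positivity
  set K : Set (Eucl n) := {x | c < f x} with hK
  have hKm : MeasurableSet K := measurableSet_lt measurable_const hmeas
  have hKfin : volume K < ⊤ :=
    lt_of_le_of_lt (measure_mono (Set.setOf_subset_setOf.2 (fun x hx => le_of_lt hx)))
      (hint.measure_ge_lt_top hc0)
  have hμK : 0 < (volume K).toReal := ENNReal.toReal_pos hk hKfin.ne
  set d : ℝ := c ^ ((1:ℝ)/2) * ((1/2 : ℝ)^n * (volume K).toReal) with hd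
  have hd0 : 0 < d := by positivity
  refine ⟨((∫ x, f x) / d)^2, ?_⟩
  rintro _ ⟨y, rfl⟩
  set S : Set (Eucl n) := AffineMap.homothety y (1/2 : ℝ) '' K with hS
  have hSm : MeasurableSet S := by
    have : S = (fun z : Eucl n => (2:ℝ) • z - y) ⁻¹' K := by
      ext z
      simp only [hS, Set.mem_image, Set.mem_preimage, AffineMap.homothety_apply, vsub_eq_sub,
        vadd_eq_add]
      constructor
      · rintro ⟨x, hx, rfl⟩
        convert hx using 1
        module
      · intro hz
        exact ⟨(2:ℝ) • z - y, hz, by module⟩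
    rw [this]
    exact ((continuous_const_smul (2:ℝ)).sub continuous_const).measurable hKm
  have hSvol : (volume S).toReal = (1/2 : ℝ)^n * (volume K).toReal := by
    rw [hS, Measure.addHaar_image_homothety]
    rw [ENNReal.toReal_mul, ENNReal.toReal_ofReal (abs_nonneg _)]
    congr 1
    rw [abs_of_nonneg (by positivity)]
    congr 1
    simp [finrank_euclideanSpace]
  have hSfin : volume S ≠ ⊤ := by
    rw [hS, Measure.addHaar_image_homothety]
    exact (ENNReal.mul_lt_top ENNReal.ofReal_lt_top hKfin).ne
  have hlow : ∀ z ∈ S, c ^ ((1:ℝ)/2) * f y ^ ((1:ℝ)/2) ≤ f z := by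
    rintro _ ⟨x, hx, rfl⟩
    have h1 : AffineMap.homothety y (1/2:ℝ) x = (1/2 : ℝ) • x + (1 - (1/2:ℝ)) • y := by
      simp only [AffineMap.homothety_apply, vsub_eq_sub, vadd_eq_add]
      module
    rw [h1]
    refine le_trans ?_ (hlc x y (1/2) (by norm_num) (by norm_num))
    have : c ^ ((1:ℝ)/2) ≤ f x ^ ((1:ℝ)/2) :=
      Real.rpow_le_rpow hc0.le (le_of_lt hx) (by norm_num)
    have h2 : (1 - (1/2:ℝ)) = (1:ℝ)/2 := by norm_num
    rw [h2]
    exact mul_le_mul_of_nonneg_right this (Real.rpow_nonneg (h0 y) _)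
  have hkey : (c ^ ((1:ℝ)/2) * f y ^ ((1:ℝ)/2)) * (volume S).toReal ≤ ∫ x, f x := by
    refine le_trans (setIntegral_ge_of_const_le_real hSm hSfin hlow hint.integrableOn) ?_
    exact setIntegral_le_integral hint (Filter.Eventually.of_forall h0)
  rw [hSvol] at hkey
  have hkey2 : f y ^ ((1:ℝ)/2) * d ≤ ∫ x, f x := by
    rw [hd]; ring_nf; ring_nf at hkey; linarith
  have h3 : f y ^ ((1:ℝ)/2) ≤ (∫ x, f x) / d := (le_div_iff₀ hd0).2 hkey2
  calc f y = (f y ^ ((1:ℝ)/2))^2 := by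
        rw [← Real.rpow_natCast (f y ^ ((1:ℝ)/2)) 2, ← Real.rpow_mul (h0 y)]
        norm_num
    _ ≤ ((∫ x, f x) / d)^2 := by
        apply pow_le_pow_left₀ (Real.rpow_nonneg (h0 y) _) h3

/-- For `f ∈ Q₀ⁿ` dominating `a·‖f‖_∞·1_{B₂ⁿ}` for some `a ∈ [e^{−n}, 1]`
(e.g. for `f` in John's position), one has
`sup_{|y−x| ≤ t} f(y) ≤ e^{nt} · f(x/(1+t))` for all `t > 0` and `x`. -/
theorem sup_ball_le_of_john_position (n : ℕ) (hn : 1 ≤ n)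
    (f : Eucl n → ℝ) (hf : MemQ0 f)
    (hJohn : ∃ a : ℝ, a ∈ Set.Icc (Real.exp (-(n : ℝ))) 1 ∧
      ∀ x : Eucl n,
        a * supNorm f * (Metric.closedBall (0 : Eucl n) 1).indicator
          (fun _ => (1 : ℝ)) x ≤ f x) :
    ∀ t : ℝ, 0 < t → ∀ x : Eucl n,
      (⨆ y ∈ Metric.closedBall x t, f y) ≤
        Real.exp ((n : ℝ) * t) * f ((1 + t)⁻¹ • x) := by
  obtain ⟨h0, hlc, husc, hint, hpos⟩ := hf
  have hbdd : BddAbove (Set.range f) := bdd_aux f h0 hlc husc hint hpos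
  obtain ⟨a, ⟨ha1, ha2⟩, hJ⟩ := hJohn
  intro t ht x
  have hrhs0 : 0 ≤ Real.exp ((n : ℝ) * t) * f ((1 + t)⁻¹ • x) :=
    mul_nonneg (Real.exp_pos _).le (h0 _)
  -- reduce to pointwise bound
  have key : ∀ y ∈ Metric.closedBall x t, f y ≤ Real.exp ((n : ℝ) * t) * f ((1 + t)⁻¹ • x) := by
    intro y hy
    rcases eq_or_lt_of_le (h0 y) with h | hfy
    · rw [← h]; exact hrhs0
    -- the auxiliary point z on the unit ball
    set z : Eucl n := t⁻¹ • (x - y) with hz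
    have hzball : z ∈ Metric.closedBall (0 : Eucl n) 1 := by
      rw [Metric.mem_closedBall, dist_zero_right, hz, norm_smul]
      rw [Metric.mem_closedBall, dist_eq_norm] at hy
      rw [norm_inv, Real.norm_eq_abs, abs_of_pos ht]
      rw [inv_mul_le_iff₀ ht, mul_one]
      rwa [← norm_sub_rev]
    have hfz : Real.exp (-(n:ℝ)) * f y ≤ f z := by
      have h1 : f y ≤ supNorm f := le_ciSup hbdd y
      have hM0 : 0 ≤ supNorm f := le_trans (h0 y) h1
      have h2 := hJ z
      rw [Set.indicator_of_mem hzball, mul_one] at h2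
      calc Real.exp (-(n:ℝ)) * f y ≤ a * supNorm f :=
            mul_le_mul ha1 h1 (h0 y) (le_trans (Real.exp_pos _).le ha1)
        _ ≤ f z := h2
    set s : ℝ := (1 + t)⁻¹ with hs
    have h1t : (0:ℝ) < 1 + t := by linarith
    have hs0 : 0 < s := inv_pos.2 h1t
    have hs1 : s < 1 := by rw [hs]; rw [inv_lt_one_iff₀]; right; linarith
    have hcomb : s • y + (1 - s) • z = (1 + t)⁻¹ • x := by
      rw [hz, hs, smul_smul]
      have ht' : t ≠ 0 := ne_of_gt ht
      have h1t' : (1:ℝ) + t ≠ 0 := by positivity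
      have h1s : (1 - (1+t)⁻¹) * t⁻¹ = (1+t)⁻¹ := by field_simp; ring
      rw [h1s]
      module
    have hlc' := hlc y z s hs0 hs1
    rw [hcomb] at hlc'
    -- lower-bound the left side
    have h3 : (Real.exp (-(n:ℝ)) * f y) ^ (1 - s) ≤ f z ^ (1 - s) :=
      Real.rpow_le_rpow (by positivity) hfz (by linarith)
    have h4 : f y ^ s * (Real.exp (-(n:ℝ)) * f y) ^ (1 - s) ≤ f ((1 + t)⁻¹ • x) :=
      le_trans (mul_le_mul_of_nonneg_left h3 (Real.rpow_nonneg (h0 y) _)) hlc'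
    have h5 : f y ^ s * (Real.exp (-(n:ℝ)) * f y) ^ (1 - s)
        = Real.exp (-(n:ℝ) * (1 - s)) * f y := by
      rw [Real.mul_rpow (Real.exp_pos _).le (h0 y), ← Real.exp_mul,
        mul_left_comm, ← Real.rpow_add hfy, show s + (1-s) = 1 by ring, Real.rpow_one]
    rw [h5] at h4
    -- conclude
    have h6 : f y ≤ Real.exp ((n:ℝ) * (1 - s)) * f ((1 + t)⁻¹ • x) := by
      have hE : Real.exp ((n:ℝ)*(1-s)) * Real.exp (-(n:ℝ) * (1 - s)) = 1 := by
        rw [← Real.exp_add, show (n:ℝ)*(1-s) + -(n:ℝ)*(1-s) = 0 by ring, Real.exp_zero]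
      have h7 := mul_le_mul_of_nonneg_left h4 (Real.exp_pos ((n:ℝ)*(1-s))).le
      rw [← mul_assoc, hE, one_mul] at h7
      exact h7
    refine le_trans h6 (mul_le_mul_of_nonneg_right ?_ (h0 _))
    apply Real.exp_le_exp.2
    have h1ss : 1 - s ≤ t := by
      rw [hs]
      have : (1:ℝ) ≤ 1 + t := by linarith
      have h7 : (1+t)⁻¹ ≥ 1 - t := by
        rw [ge_iff_le, ← sub_nonneg]
        have : (1+t)⁻¹ - (1 - t) = t^2 * (1+t)⁻¹ := by field_simp; ring
        rw [this]; positivity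
      linarith
    exact mul_le_mul_of_nonneg_left h1ss (Nat.cast_nonneg n)
  -- now the supremum
  apply ciSup_le
  intro y
  rcases em (y ∈ Metric.closedBall x t) with h | h
  · rw [ciSup_pos h]; exact key y h
  · have he : IsEmpty (y ∈ Metric.closedBall x t) := ⟨h⟩
    rw [Real.iSup_of_isEmpty]
    exact hrhs0
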